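/- Under the same bivariate normal model, with G = (θ̂ - θ)/(σ v_θ^{1/2}) and θ̃ = θ̂ - ρσ v_θ^{1/2} k(γ̂), the variance of θ̃ equals σ² v_θ [1 - 2ρ² ∫ k(z)(z - γ)φ(z - γ) dz + ρ² ∫ (k(z) - m_k(γ))² φ(z - γ) dz], where m_k(γ) = ∫ k(z)φ(z - γ) dz and all integrals are over the real line. -/

import Mathlib

open MeasureTheory Real Filter Topology ProbabilityTheory

open intervalIntegral
open scoped ENNReal NNReal

/-- standard normal density -/
noncomputable def stdφ (x : ℝ) : ℝ := Real.exp (-x ^ 2 / 2) / Real.sqrt (2 * Real.pi)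

/-- standard normal cumulative distribution function -/
noncomputable def stdΦ (x : ℝ) : ℝ := ∫ t in Set.Iic x, stdφ t

/-- density of the bivariate normal distribution with means `m1, m2`,
standard deviations `s1, s2` and correlation `ρ` -/
noncomputable def bvnPdf (m1 m2 s1 s2 ρ : ℝ) (p : ℝ × ℝ) : ℝ :=
  (2 * Real.pi * s1 * s2 * Real.sqrt (1 - ρ ^ 2))⁻¹ *
    Real.exp (-(1 / (2 * (1 - ρ ^ 2))) *
      (((p.1 - m1) / s1) ^ 2 - 2 * ρ * ((p.1 - m1) / s1) * ((p.2 - m2) / s2) +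
        ((p.2 - m2) / s2) ^ 2))

/-- the function k -/
noncomputable def kfun (d γ : ℝ) : ℝ := ∫ z in (-d)..d, z * stdφ (z - γ)

/-- the function m_k -/
noncomputable def mkfun (d γ : ℝ) : ℝ := ∫ z, kfun d z * stdφ (z - γ)


lemma gexp_eq {v : ℝ} (hv : 0 < v) (m x : ℝ) :
    Real.exp (-(x-m)^2/(2*v)) = Real.exp (-(2*v)⁻¹ * (x-m)^2) := by
  congr 1; field_simp

lemma base1 {b : ℝ} (hb : 0 < b) : ∫ x : ℝ, x * Real.exp (-b*x^2) = 0 := by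
  have hI : Integrable (fun x : ℝ => x * Real.exp (-b*x^2)) := integrable_mul_exp_neg_mul_sq hb
  have hE : Integrable (fun x : ℝ => -(2*b)⁻¹ * Real.exp (-b*x^2)) :=
    (integrable_exp_neg_mul_sq hb).const_mul _
  refine integral_eq_zero_of_hasDerivAt_of_integrable
    (f := fun x => -(2*b)⁻¹ * Real.exp (-b*x^2)) ?_ hI hE
  intro x
  have h1 : HasDerivAt (fun x : ℝ => -b*x^2) (-b*(2*x)) x := by
    simpa using (hasDerivAt_pow 2 x).const_mul (-b)
  have := (h1.exp).const_mul (-(2*b)⁻¹)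
  convert this using 1
  · rfl
  have h2b : (2*b)⁻¹ * (2*b) = 1 := inv_mul_cancel₀ (by positivity)
  linear_combination (-(x * Real.exp (-b*x^2))) * h2b

lemma base2_int {b : ℝ} (hb : 0 < b) : Integrable (fun x : ℝ => x^2 * Real.exp (-b*x^2)) := by
  have := integrable_rpow_mul_exp_neg_mul_sq hb (s := 2) (by norm_num)
  have h2 : ∀ x : ℝ, x ^ (2:ℝ) = x ^ 2 := fun x => by
    rw [show (2:ℝ) = ((2:ℕ):ℝ) by norm_num, Real.rpow_natCast]
  simpa only [h2] using this

lemma base2 {b : ℝ} (hb : 0 < b) :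
    ∫ x : ℝ, x^2 * Real.exp (-b*x^2) = (2*b)⁻¹ * Real.sqrt (π/b) := by
  have hI0 : Integrable (fun x : ℝ => Real.exp (-b*x^2)) := integrable_exp_neg_mul_sq hb
  have hI1 : Integrable (fun x : ℝ => x * Real.exp (-b*x^2)) := integrable_mul_exp_neg_mul_sq hb
  have hI2 := base2_int hb
  have key : ∫ x : ℝ, (x^2 * Real.exp (-b*x^2) - (2*b)⁻¹ * Real.exp (-b*x^2)) = 0 := by
    refine integral_eq_zero_of_hasDerivAt_of_integrable
      (f := fun x => -(2*b)⁻¹ * (x * Real.exp (-b*x^2))) ?_ (hI2.sub (hI0.const_mul _))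
      (hI1.const_mul _)
    intro x
    have h1 : HasDerivAt (fun x : ℝ => -b*x^2) (-b*(2*x)) x := by
      simpa using (hasDerivAt_pow 2 x).const_mul (-b)
    have h2 : HasDerivAt (fun x : ℝ => x * Real.exp (-b*x^2))
        (1 * Real.exp (-b*x^2) + x * (Real.exp (-b*x^2) * (-b*(2*x)))) x :=
      (hasDerivAt_id x).mul h1.exp
    have := h2.const_mul (-(2*b)⁻¹)
    convert this using 1
    · rfl
    have h2b : (2*b)⁻¹ * (2*b) = 1 := inv_mul_cancel₀ (by positivity)
    linear_combination (-(x^2 * Real.exp (-b*x^2))) * h2b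
  have := integral_sub hI2 (hI0.const_mul ((2*b)⁻¹))
  rw [key] at this
  have h0 : ∫ x : ℝ, Real.exp (-b*x^2) = Real.sqrt (π/b) := integral_gaussian b
  rw [MeasureTheory.integral_const_mul, h0] at this
  linarith

lemma sqrt_pib {v : ℝ} (hv : 0 < v) : Real.sqrt (π / (2*v)⁻¹) = Real.sqrt (2*π*v) := by
  congr 1; field_simp

lemma gauss_a0 {v : ℝ} (hv : 0 < v) (m : ℝ) :
    Integrable (fun x : ℝ => Real.exp (-(x-m)^2/(2*v))) := by
  have hb : 0 < (2*v)⁻¹ := by positivity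
  have := (integrable_exp_neg_mul_sq hb).comp_sub_right m
  refine this.congr ?_
  filter_upwards with x
  rw [gexp_eq hv]

lemma gauss_a1 {v : ℝ} (hv : 0 < v) (m : ℝ) :
    ∫ x : ℝ, Real.exp (-(x-m)^2/(2*v)) = Real.sqrt (2*π*v) := by
  have hb : 0 < (2*v)⁻¹ := by positivity
  calc ∫ x : ℝ, Real.exp (-(x-m)^2/(2*v))
      = ∫ x : ℝ, Real.exp (-(2*v)⁻¹ * x^2) := by
        rw [← integral_sub_right_eq_self (μ := volume)
          (fun t => Real.exp (-(2*v)⁻¹ * t^2)) m]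
        congr 1; funext x; rw [gexp_eq hv]
    _ = Real.sqrt (π / (2*v)⁻¹) := integral_gaussian _
    _ = Real.sqrt (2*π*v) := sqrt_pib hv

lemma gauss_b0 {v : ℝ} (hv : 0 < v) (m a : ℝ) :
    Integrable (fun x : ℝ => (x-a) * Real.exp (-(x-m)^2/(2*v))) := by
  have hb : 0 < (2*v)⁻¹ := by positivity
  have h1 : Integrable (fun t : ℝ => (t+(m-a)) * Real.exp (-(2*v)⁻¹*t^2)) :=
    ((integrable_mul_exp_neg_mul_sq hb).add ((integrable_exp_neg_mul_sq hb).const_mul (m-a))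
      ).congr (by filter_upwards with t; simp only [Pi.add_apply]; ring)
  have := h1.comp_sub_right m
  refine this.congr ?_
  filter_upwards with x
  rw [gexp_eq hv]; ring_nf

lemma gauss_b1 {v : ℝ} (hv : 0 < v) (m a : ℝ) :
    ∫ x : ℝ, (x-a) * Real.exp (-(x-m)^2/(2*v)) = (m-a) * Real.sqrt (2*π*v) := by
  have hb : 0 < (2*v)⁻¹ := by positivity
  have h1 : Integrable (fun t : ℝ => t * Real.exp (-(2*v)⁻¹*t^2)) :=
    integrable_mul_exp_neg_mul_sq hb
  have h0 : Integrable (fun t : ℝ => Real.exp (-(2*v)⁻¹*t^2)) := integrable_exp_neg_mul_sq hb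
  calc ∫ x : ℝ, (x-a) * Real.exp (-(x-m)^2/(2*v))
      = ∫ t : ℝ, (t * Real.exp (-(2*v)⁻¹*t^2) + (m-a) * Real.exp (-(2*v)⁻¹*t^2)) := by
        rw [← integral_sub_right_eq_self (μ := volume)
          (fun t => t * Real.exp (-(2*v)⁻¹*t^2) + (m-a) * Real.exp (-(2*v)⁻¹*t^2)) m]
        congr 1; funext x; rw [gexp_eq hv]; ring
    _ = (m-a) * Real.sqrt (2*π*v) := by
        rw [integral_add h1 (h0.const_mul _), base1 hb, MeasureTheory.integral_const_mul,
          integral_gaussian, sqrt_pib hv]; ring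

lemma gauss_c0 {v : ℝ} (hv : 0 < v) (m a : ℝ) :
    Integrable (fun x : ℝ => (x-a)^2 * Real.exp (-(x-m)^2/(2*v))) := by
  have hb : 0 < (2*v)⁻¹ := by positivity
  have h1 : Integrable (fun t : ℝ => (t+(m-a))^2 * Real.exp (-(2*v)⁻¹*t^2)) := by
    have := ((base2_int hb).add ((integrable_mul_exp_neg_mul_sq hb).const_mul (2*(m-a)))).add
      ((integrable_exp_neg_mul_sq hb).const_mul ((m-a)^2))
    refine this.congr ?_
    filter_upwards with t; simp only [Pi.add_apply]; ring
  have := h1.comp_sub_right m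
  refine this.congr ?_
  filter_upwards with x
  rw [gexp_eq hv]; ring_nf

lemma gauss_c1 {v : ℝ} (hv : 0 < v) (m a : ℝ) :
    ∫ x : ℝ, (x-a)^2 * Real.exp (-(x-m)^2/(2*v)) = (v + (m-a)^2) * Real.sqrt (2*π*v) := by
  have hb : 0 < (2*v)⁻¹ := by positivity
  have h2 : Integrable (fun t : ℝ => t^2 * Real.exp (-(2*v)⁻¹*t^2)) := base2_int hb
  have h1 : Integrable (fun t : ℝ => t * Real.exp (-(2*v)⁻¹*t^2)) :=
    integrable_mul_exp_neg_mul_sq hb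
  have h0 : Integrable (fun t : ℝ => Real.exp (-(2*v)⁻¹*t^2)) := integrable_exp_neg_mul_sq hb
  calc ∫ x : ℝ, (x-a)^2 * Real.exp (-(x-m)^2/(2*v))
      = ∫ t : ℝ, (t^2 * Real.exp (-(2*v)⁻¹*t^2) + (2*(m-a)) * (t * Real.exp (-(2*v)⁻¹*t^2))
          + (m-a)^2 * Real.exp (-(2*v)⁻¹*t^2)) := by
        rw [← integral_sub_right_eq_self (μ := volume)
          (fun t => t^2 * Real.exp (-(2*v)⁻¹*t^2) + (2*(m-a)) * (t * Real.exp (-(2*v)⁻¹*t^2))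
          + (m-a)^2 * Real.exp (-(2*v)⁻¹*t^2)) m]
        congr 1; funext x; rw [gexp_eq hv]; ring
    _ = (v + (m-a)^2) * Real.sqrt (2*π*v) := by
        have h21 : Integrable (fun t : ℝ => t^2 * Real.exp (-(2*v)⁻¹*t^2)
            + (2*(m-a)) * (t * Real.exp (-(2*v)⁻¹*t^2))) :=
          (h2.add (h1.const_mul (2*(m-a)))).congr
            (by filter_upwards with t; simp only [Pi.add_apply])
        rw [integral_add h21 (h0.const_mul _), integral_add h2 (h1.const_mul _),
          base2 hb, MeasureTheory.integral_const_mul, MeasureTheory.integral_const_mul,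
          base1 hb, integral_gaussian, sqrt_pib hv]
        have : ((2:ℝ)*(2*v)⁻¹)⁻¹ = v := by field_simp
        rw [this]; ring

lemma stdφ_eq (u : ℝ) : stdφ u = Real.exp (-u^2/(2*1)) / Real.sqrt (2*π*1) := by
  simp [stdφ]

lemma stdφ_cont : Continuous stdφ := by
  unfold stdφ
  exact (Real.continuous_exp.comp (by continuity)).div_const _

lemma stdφ_nonneg (u : ℝ) : 0 ≤ stdφ u := by
  unfold stdφ; positivity

lemma stdφ_le_one (u : ℝ) : stdφ u ≤ 1 := by
  unfold stdφ
  rw [div_le_one (by positivity)]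
  calc Real.exp (-u^2/2) ≤ 1 := by
        rw [Real.exp_le_one_iff]; nlinarith [sq_nonneg u]
    _ ≤ Real.sqrt (2*π) := by
        rw [show (1:ℝ) = Real.sqrt 1 by simp]
        exact Real.sqrt_le_sqrt (by nlinarith [Real.pi_gt_three])

lemma kfun_cont (d : ℝ) : Continuous (kfun d) := by
  have : Continuous (Function.uncurry fun (γ : ℝ) (t : ℝ) => t * stdφ (t - γ)) := by
    apply Continuous.mul
    · exact continuous_snd
    · exact stdφ_cont.comp (continuous_snd.sub continuous_fst)
  exact intervalIntegral.continuous_parametric_intervalIntegral_of_continuous'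
    (f := fun (γ : ℝ) (t : ℝ) => t * stdφ (t - γ)) (μ := volume) this (-d) d

lemma kfun_bound {d : ℝ} (hd : 0 < d) (y : ℝ) : |kfun d y| ≤ 2*d^2 := by
  have h : ∀ z ∈ Set.uIoc (-d) d, ‖z * stdφ (z - y)‖ ≤ d := by
    intro z hz
    rw [Set.uIoc_of_le (by linarith)] at hz
    have h1 : |z| ≤ d := abs_le.mpr ⟨le_of_lt hz.1, hz.2⟩
    rw [norm_mul, Real.norm_eq_abs, Real.norm_eq_abs,
      abs_of_nonneg (stdφ_nonneg _)]
    calc |z| * stdφ (z - y) ≤ d * 1 :=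
          mul_le_mul h1 (stdφ_le_one _) (stdφ_nonneg _) hd.le
      _ = d := mul_one d
  have := intervalIntegral.norm_integral_le_of_norm_le_const h
  rw [Real.norm_eq_abs] at this
  calc |kfun d y| ≤ d * |d - (-d)| := this
    _ = 2*d^2 := by rw [abs_of_nonneg (by linarith)]; ring

lemma kfun_stdφ_integrable {d : ℝ} (hd : 0 < d) (γ : ℝ) :
    Integrable (fun z => kfun d z * stdφ (z - γ)) := by
  have hφ : Integrable (fun z : ℝ => stdφ (z - γ)) := by
    have := (gauss_a0 (v := 1) one_pos γ).div_const (Real.sqrt (2*π*1))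
    refine this.congr ?_
    filter_upwards with z
    rw [stdφ_eq]
  exact hφ.bdd_mul (kfun_cont d).aestronglyMeasurable
    (c := 2*d^2) (ae_of_all _ fun z => by rw [Real.norm_eq_abs]; exact kfun_bound hd z)

lemma mkfun_bound {d : ℝ} (hd : 0 < d) (γ : ℝ) : |mkfun d γ| ≤ 2*d^2 := by
  have hφ : Integrable (fun z : ℝ => 2*d^2 * stdφ (z - γ)) := by
    have := ((gauss_a0 (v := 1) one_pos γ).div_const (Real.sqrt (2*π*1))).const_mul (2*d^2)
    refine this.congr ?_
    filter_upwards with z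
    rw [stdφ_eq]
  have h1 : ‖mkfun d γ‖ ≤ ∫ z, 2*d^2 * stdφ (z - γ) := by
    refine norm_integral_le_of_norm_le hφ ?_
    filter_upwards with z
    rw [norm_mul, Real.norm_eq_abs, Real.norm_eq_abs, abs_of_nonneg (stdφ_nonneg _)]
    exact mul_le_mul_of_nonneg_right (kfun_bound hd z) (stdφ_nonneg _)
  have h2 : ∫ z, 2*d^2 * stdφ (z - γ) = 2*d^2 := by
    rw [MeasureTheory.integral_const_mul]
    have : ∫ z : ℝ, stdφ (z - γ) = 1 := by
      rw [show (fun z : ℝ => stdφ (z - γ)) = fun z : ℝ =>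
        Real.exp (-(z-γ)^2/(2*1)) / Real.sqrt (2*π*1) from funext fun z => stdφ_eq _]
      rw [MeasureTheory.integral_div, gauss_a1 one_pos γ, div_self (by positivity)]
    rw [this, mul_one]
  calc |mkfun d γ| = ‖mkfun d γ‖ := (Real.norm_eq_abs _).symm
    _ ≤ 2*d^2 := h2 ▸ h1
lemma bvn_fact {s ρ : ℝ} (hs : 0 < s) (hρ2 : ρ^2 < 1) (θ γ x y : ℝ) :
    bvnPdf θ γ s 1 ρ (x, y) =
      (Real.exp (-(y-γ)^2/(2*1)) / Real.sqrt (2*π*1)) *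
      (Real.exp (-(x-(θ+ρ*s*(y-γ)))^2/(2*(s^2*(1-ρ^2)))) / Real.sqrt (2*π*(s^2*(1-ρ^2)))) := by
  have h1ρ : 0 < 1 - ρ^2 := by linarith
  have ht2 : 0 < s^2*(1-ρ^2) := by positivity
  have hsq : Real.sqrt (2*π*1) * Real.sqrt (2*π*(s^2*(1-ρ^2)))
      = 2*π*s*Real.sqrt (1-ρ^2) := by
    rw [← Real.sqrt_mul (by positivity)]
    rw [show (2*π*1) * (2*π*(s^2*(1-ρ^2))) = (2*π*s)^2 * (1-ρ^2) by ring]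
    rw [Real.sqrt_mul (by positivity), Real.sqrt_sq (by positivity)]
  rw [div_mul_div_comm, ← Real.exp_add, hsq]
  unfold bvnPdf
  rw [inv_mul_eq_div]
  have hs' : s ≠ 0 := ne_of_gt hs
  have h1ρ' : (1 - ρ^2) ≠ 0 := ne_of_gt h1ρ
  congr 1
  · field_simp
    ring
  · ring

lemma transport {Ω : Type*} [MeasurableSpace Ω] (P : Measure Ω) [IsProbabilityMeasure P]
    (pair : Ω → ℝ×ℝ) (hpm : Measurable pair) (pdf : ℝ×ℝ → ℝ)
    (hc : Continuous pdf) (hnn : ∀ p, 0 ≤ pdf p)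
    (hjoint : Measure.map pair P = volume.withDensity (fun p => ENNReal.ofReal (pdf p)))
    (F : ℝ×ℝ → ℝ) (hF : Continuous F) :
    ∫ ω, F (pair ω) ∂P = ∫ p, pdf p * F p := by
  have h1 : ∫ ω, F (pair ω) ∂P = ∫ p, F p ∂(Measure.map pair P) :=
    (integral_map hpm.aemeasurable hF.aestronglyMeasurable).symm
  rw [h1, hjoint]
  have hm : Measurable (fun p : ℝ×ℝ => (pdf p).toNNReal) :=
    hc.measurable.real_toNNReal
  have : (fun p : ℝ×ℝ => ENNReal.ofReal (pdf p))
      = fun p => ((fun q : ℝ×ℝ => (pdf q).toNNReal) p : ℝ≥0∞) := rfl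
  rw [this, integral_withDensity_eq_integral_smul hm]
  congr 1
  funext p
  rw [NNReal.smul_def, smul_eq_mul, Real.coe_toNNReal _ (hnn p)]

lemma pdf_integrable {Ω : Type*} [MeasurableSpace Ω] (P : Measure Ω) [IsProbabilityMeasure P]
    (pair : Ω → ℝ×ℝ) (hpm : Measurable pair) (pdf : ℝ×ℝ → ℝ)
    (hc : Continuous pdf) (hnn : ∀ p, 0 ≤ pdf p)
    (hjoint : Measure.map pair P = volume.withDensity (fun p => ENNReal.ofReal (pdf p))) :
    Integrable pdf (volume : Measure (ℝ×ℝ)) := by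
  have hprob : IsProbabilityMeasure (Measure.map pair P) :=
    Measure.isProbabilityMeasure_map hpm.aemeasurable
  have huniv : (Measure.map pair P) Set.univ = 1 := measure_univ
  rw [hjoint, withDensity_apply _ MeasurableSet.univ, setLIntegral_univ] at huniv
  refine ⟨hc.aestronglyMeasurable, ?_⟩
  unfold HasFiniteIntegral
  have : ∀ p : ℝ×ℝ, ‖pdf p‖ₑ = ENNReal.ofReal (pdf p) := fun p => by
    rw [← Real.enorm_eq_ofReal (hnn p)]
  simp only [this, huniv]
  exact ENNReal.one_lt_top
noncomputable def NNf (θ γ s ρ : ℝ) (y x : ℝ) : ℝ :=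
  Real.exp (-(x-(θ+ρ*s*(y-γ)))^2/(2*(s^2*(1-ρ^2)))) / Real.sqrt (2*π*(s^2*(1-ρ^2)))

section core

variable {s ρ : ℝ} {θ γ : ℝ}

lemma bvn_fact' (hs : 0 < s) (hρ2 : ρ^2 < 1) (x y : ℝ) :
    bvnPdf θ γ s 1 ρ (x, y) = stdφ (y-γ) * NNf θ γ s ρ y x := by
  rw [bvn_fact hs hρ2, ← stdφ_eq]; rfl

lemma bvnPdf_nonneg (hs : 0 < s) (hρ2 : ρ^2 < 1) (p : ℝ×ℝ) :
    0 ≤ bvnPdf θ γ s 1 ρ p := by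
  have h1ρ : 0 < 1 - ρ^2 := by linarith
  unfold bvnPdf
  positivity

lemma bvnPdf_cont : Continuous (bvnPdf θ γ s 1 ρ) := by
  unfold bvnPdf
  fun_prop

lemma ht2 (hs : 0 < s) (hρ2 : ρ^2 < 1) : 0 < s^2*(1-ρ^2) := by
  have h1ρ : 0 < 1 - ρ^2 := by linarith
  positivity

lemma NNf_nonneg (y x : ℝ) : 0 ≤ NNf θ γ s ρ y x := by
  unfold NNf; positivity

lemma NNf_b1 (hs : 0 < s) (hρ2 : ρ^2 < 1) (y a : ℝ) :
    ∫ x, (x - a) * NNf θ γ s ρ y x = θ+ρ*s*(y-γ) - a := by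
  have h : (fun x => (x - a) * NNf θ γ s ρ y x)
      = fun x => ((x-a) * Real.exp (-(x-(θ+ρ*s*(y-γ)))^2/(2*(s^2*(1-ρ^2)))))
        / Real.sqrt (2*π*(s^2*(1-ρ^2))) := by
    funext x; unfold NNf; ring
  rw [h, MeasureTheory.integral_div, gauss_b1 (ht2 hs hρ2),
    mul_div_assoc, div_self (by have := ht2 hs hρ2; positivity), mul_one]

lemma NNf_c0 (hs : 0 < s) (hρ2 : ρ^2 < 1) (y a : ℝ) :
    Integrable (fun x => (x - a)^2 * NNf θ γ s ρ y x) := by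
  refine ((gauss_c0 (ht2 hs hρ2) (θ+ρ*s*(y-γ)) a).div_const
    (Real.sqrt (2*π*(s^2*(1-ρ^2))))).congr ?_
  filter_upwards with x
  unfold NNf; ring

lemma NNf_c1 (hs : 0 < s) (hρ2 : ρ^2 < 1) (y a : ℝ) :
    ∫ x, (x - a)^2 * NNf θ γ s ρ y x = s^2*(1-ρ^2) + (θ+ρ*s*(y-γ) - a)^2 := by
  have h : (fun x => (x - a)^2 * NNf θ γ s ρ y x)
      = fun x => ((x-a)^2 * Real.exp (-(x-(θ+ρ*s*(y-γ)))^2/(2*(s^2*(1-ρ^2)))))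
        / Real.sqrt (2*π*(s^2*(1-ρ^2))) := by
    funext x; unfold NNf; ring
  rw [h, MeasureTheory.integral_div, gauss_c1 (ht2 hs hρ2),
    mul_div_assoc, div_self (by have := ht2 hs hρ2; positivity), mul_one]

lemma Iφ (γ : ℝ) : Integrable (fun y : ℝ => stdφ (y - γ)) := by
  refine ((gauss_a0 (v := 1) one_pos γ).div_const (Real.sqrt (2*π*1))).congr ?_
  filter_upwards with z
  rw [stdφ_eq]

lemma stdφ_int_one (γ : ℝ) : ∫ y : ℝ, stdφ (y - γ) = 1 := by
  rw [show (fun y : ℝ => stdφ (y - γ)) = fun y : ℝ =>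
    Real.exp (-(y-γ)^2/(2*1)) / Real.sqrt (2*π*1) from funext fun z => stdφ_eq _]
  rw [MeasureTheory.integral_div, gauss_a1 one_pos γ, div_self (by positivity)]

lemma Iwφ (γ : ℝ) : Integrable (fun y : ℝ => (y - γ) * stdφ (y - γ)) := by
  refine ((gauss_b0 (v := 1) one_pos γ γ).div_const (Real.sqrt (2*π*1))).congr ?_
  filter_upwards with z
  rw [stdφ_eq]; ring

lemma wφ_int_zero (γ : ℝ) : ∫ y : ℝ, (y - γ) * stdφ (y - γ) = 0 := by
  rw [show (fun y : ℝ => (y - γ) * stdφ (y - γ)) = fun y : ℝ =>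
    ((y - γ) * Real.exp (-(y-γ)^2/(2*1))) / Real.sqrt (2*π*1) from
    funext fun z => by rw [stdφ_eq]; ring]
  rw [MeasureTheory.integral_div, gauss_b1 one_pos γ γ]
  simp

lemma Iw2φ (γ : ℝ) : Integrable (fun y : ℝ => (y - γ)^2 * stdφ (y - γ)) := by
  refine ((gauss_c0 (v := 1) one_pos γ γ).div_const (Real.sqrt (2*π*1))).congr ?_
  filter_upwards with z
  rw [stdφ_eq]; ring

lemma w2φ_int_one (γ : ℝ) : ∫ y : ℝ, (y - γ)^2 * stdφ (y - γ) = 1 := by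
  rw [show (fun y : ℝ => (y - γ)^2 * stdφ (y - γ)) = fun y : ℝ =>
    ((y - γ)^2 * Real.exp (-(y-γ)^2/(2*1))) / Real.sqrt (2*π*1) from
    funext fun z => by rw [stdφ_eq]; ring]
  rw [MeasureTheory.integral_div, gauss_c1 one_pos γ γ]
  simp
  exact Real.sqrt_ne_zero'.mpr Real.pi_pos

lemma outer_int (γ : ℝ) (g : ℝ → ℝ) (hgc : Continuous g) (B : ℝ)
    (hgb : ∀ y, |g y| ≤ B) (c0 c1 a : ℝ) :
    Integrable (fun y : ℝ => stdφ (y-γ) * (c0 + (a + c1*(y-γ) - g y)^2)) := by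
  have hB0 : 0 ≤ B := (abs_nonneg _).trans (hgb 0)
  have h1 := (Iφ γ).const_mul c0
  have h2 := (Iw2φ γ).const_mul (c1^2)
  have hag : ∀ y, |a - g y| ≤ |a| + B := fun y =>
    (abs_sub (a) (g y)).trans (by linarith [hgb y])
  have h3 : Integrable (fun y : ℝ => (2*c1*(a - g y)) * ((y-γ) * stdφ (y-γ))) :=
    (Iwφ γ).bdd_mul (continuous_const.mul (continuous_const.sub hgc)).aestronglyMeasurable
      (c := 2*(abs c1)*((abs a)+B)) (ae_of_all _ fun y => by
        rw [Real.norm_eq_abs, abs_mul, abs_mul]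
        have h0 : |(2:ℝ)| = 2 := by norm_num
        rw [h0]
        nlinarith [mul_le_mul_of_nonneg_left (hag y)
          (mul_nonneg (by norm_num : (0:ℝ) ≤ 2) (abs_nonneg c1)), abs_nonneg c1,
          abs_nonneg (a - g y)])
  have h4 : Integrable (fun y : ℝ => (a - g y)^2 * stdφ (y - γ)) :=
    (Iφ γ).bdd_mul ((continuous_const.sub hgc).pow 2).aestronglyMeasurable
      (c := ((abs a)+B)^2) (ae_of_all _ fun y => by
        rw [Real.norm_eq_abs, abs_pow]
        exact pow_le_pow_left₀ (abs_nonneg _) (hag y) 2)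
  refine (((h1.add h2).add h3).add h4).congr ?_
  filter_upwards with y
  simp only [Pi.add_apply]
  ring

lemma P2_int (hs : 0 < s) (hρ2 : ρ^2 < 1) (g : ℝ → ℝ) (hgc : Continuous g) (B : ℝ)
    (hgb : ∀ y, |g y| ≤ B) :
    Integrable (fun p : ℝ×ℝ => (p.1 - g p.2)^2 * bvnPdf θ γ s 1 ρ p) volume := by
  rw [Measure.volume_eq_prod]
  have hmeas : AEStronglyMeasurable
      (fun p : ℝ×ℝ => (p.1 - g p.2)^2 * bvnPdf θ γ s 1 ρ p)
      ((volume : Measure ℝ).prod volume) :=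
    (((continuous_fst.sub (hgc.comp continuous_snd)).pow 2).mul bvnPdf_cont).aestronglyMeasurable
  refine (integrable_prod_iff' hmeas).mpr ⟨?_, ?_⟩
  · filter_upwards with y
    refine ((NNf_c0 (θ := θ) (γ := γ) hs hρ2 y (g y)).const_mul (stdφ (y-γ))).congr ?_
    filter_upwards with x
    rw [bvn_fact' hs hρ2]; ring
  · have heq : (fun y => ∫ x, ‖(x - g y)^2 * bvnPdf θ γ s 1 ρ (x,y)‖) =
        fun y => stdφ (y-γ) * (s^2*(1-ρ^2) + (θ+ρ*s*(y-γ) - g y)^2) := by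
      funext y
      have h1 : ∀ x, ‖(x - g y)^2 * bvnPdf θ γ s 1 ρ (x,y)‖
          = stdφ (y-γ) * ((x - g y)^2 * NNf θ γ s ρ y x) := fun x => by
        rw [Real.norm_eq_abs,
          abs_of_nonneg (mul_nonneg (sq_nonneg _) (bvnPdf_nonneg hs hρ2 _)),
          bvn_fact' hs hρ2]; ring
      simp only [h1]
      rw [MeasureTheory.integral_const_mul, NNf_c1 hs hρ2]
    rw [heq]
    exact outer_int γ g hgc B hgb _ _ _

lemma P2_eval (hs : 0 < s) (hρ2 : ρ^2 < 1) (g : ℝ → ℝ) (hgc : Continuous g) (B : ℝ)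
    (hgb : ∀ y, |g y| ≤ B) :
    ∫ p : ℝ×ℝ, (p.1 - g p.2)^2 * bvnPdf θ γ s 1 ρ p
      = ∫ y : ℝ, stdφ (y-γ) * (s^2*(1-ρ^2) + (θ+ρ*s*(y-γ) - g y)^2) := by
  have hInt := P2_int (θ := θ) (γ := γ) hs hρ2 g hgc B hgb
  rw [Measure.volume_eq_prod] at hInt ⊢
  rw [integral_prod_symm _ hInt]
  congr 1
  funext y
  calc ∫ x, (x - g y)^2 * bvnPdf θ γ s 1 ρ (x, y)
      = ∫ x, stdφ (y-γ) * ((x - g y)^2 * NNf θ γ s ρ y x) := by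
        congr 1; funext x; rw [bvn_fact' hs hρ2]; ring
    _ = stdφ (y-γ) * (s^2*(1-ρ^2) + (θ+ρ*s*(y-γ) - g y)^2) := by
        rw [MeasureTheory.integral_const_mul, NNf_c1 hs hρ2]

lemma P1_int (hs : 0 < s) (hρ2 : ρ^2 < 1)
    (hpdfInt : Integrable (bvnPdf θ γ s 1 ρ) volume)
    (g : ℝ → ℝ) (hgc : Continuous g) (B : ℝ) (hgb : ∀ y, |g y| ≤ B) :
    Integrable (fun p : ℝ×ℝ => (p.1 - g p.2) * bvnPdf θ γ s 1 ρ p) volume := by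
  have h2 := P2_int (θ := θ) (γ := γ) hs hρ2 g hgc B hgb
  have hsum : Integrable
      (fun p : ℝ×ℝ => bvnPdf θ γ s 1 ρ p + (p.1 - g p.2)^2 * bvnPdf θ γ s 1 ρ p) volume :=
    (hpdfInt.add h2).congr (by filter_upwards with p; simp only [Pi.add_apply])
  refine hsum.mono'
    ((continuous_fst.sub (hgc.comp continuous_snd)).mul bvnPdf_cont).aestronglyMeasurable ?_
  filter_upwards with p
  rw [Real.norm_eq_abs, abs_mul, abs_of_nonneg (bvnPdf_nonneg hs hρ2 p)]
  have h1 : |p.1 - g p.2| ≤ 1 + (p.1 - g p.2)^2 := by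
    nlinarith [sq_nonneg (|p.1 - g p.2| - 1), sq_abs (p.1 - g p.2), abs_nonneg (p.1 - g p.2)]
  have h0 := bvnPdf_nonneg (θ := θ) (γ := γ) hs hρ2 p
  nlinarith [mul_le_mul_of_nonneg_right h1 h0]

lemma P1_eval (hs : 0 < s) (hρ2 : ρ^2 < 1)
    (hpdfInt : Integrable (bvnPdf θ γ s 1 ρ) volume)
    (g : ℝ → ℝ) (hgc : Continuous g) (B : ℝ) (hgb : ∀ y, |g y| ≤ B) :
    ∫ p : ℝ×ℝ, (p.1 - g p.2) * bvnPdf θ γ s 1 ρ p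
      = ∫ y : ℝ, stdφ (y-γ) * (θ+ρ*s*(y-γ) - g y) := by
  have hInt := P1_int hs hρ2 hpdfInt g hgc B hgb
  rw [Measure.volume_eq_prod] at hInt ⊢
  rw [integral_prod_symm _ hInt]
  congr 1
  funext y
  calc ∫ x, (x - g y) * bvnPdf θ γ s 1 ρ (x, y)
      = ∫ x, stdφ (y-γ) * ((x - g y) * NNf θ γ s ρ y x) := by
        congr 1; funext x; rw [bvn_fact' hs hρ2]; ring
    _ = stdφ (y-γ) * (θ+ρ*s*(y-γ) - g y) := by
        rw [MeasureTheory.integral_const_mul, NNf_b1 hs hρ2]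

end core

section outer

lemma mean_outer (γ θ c c' : ℝ) {d : ℝ} (hd : 0 < d) :
    ∫ y : ℝ, stdφ (y-γ) * (θ + c*(y-γ) - c'*kfun d y) = θ - c'*mkfun d γ := by
  have h1 := (Iφ γ).const_mul θ
  have h2 := (Iwφ γ).const_mul c
  have h3 := (kfun_stdφ_integrable hd γ).const_mul c'
  have h12 : Integrable (fun y : ℝ => θ * stdφ (y-γ) + c * ((y-γ)*stdφ (y-γ))) :=
    (h1.add h2).congr (by filter_upwards with y; simp only [Pi.add_apply])
  have heq : (fun y : ℝ => stdφ (y-γ) * (θ + c*(y-γ) - c'*kfun d y))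
      = fun y => (θ * stdφ (y-γ) + c * ((y-γ)*stdφ (y-γ))) - c' * (kfun d y * stdφ (y-γ)) := by
    funext y; ring
  rw [heq, integral_sub h12 h3, integral_add h1 h2, MeasureTheory.integral_const_mul,
    MeasureTheory.integral_const_mul, MeasureTheory.integral_const_mul,
    stdφ_int_one, wφ_int_zero, mkfun]
  ring

lemma var_outer (γ : ℝ) {d : ℝ} (hd : 0 < d) (t2 c : ℝ) :
    ∫ y : ℝ, stdφ (y-γ) * (t2 + (c*(y-γ) - c*(kfun d y - mkfun d γ))^2)
      = t2 + c^2 - 2*c^2*(∫ z, kfun d z * (z-γ) * stdφ (z-γ))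
        + c^2 * ∫ z, (kfun d z - mkfun d γ)^2 * stdφ (z-γ) := by
  have hkc := kfun_cont d
  have hkb := kfun_bound hd
  have hmkb := mkfun_bound hd γ
  have hkmk : ∀ y, |kfun d y - mkfun d γ| ≤ 4*d^2 := fun y =>
    (abs_sub (kfun d y) (mkfun d γ)).trans (by linarith [hkb y, hmkb])
  have A1 := (Iφ γ).const_mul t2
  have A2 := (Iw2φ γ).const_mul (c^2)
  have A3 : Integrable (fun y : ℝ => (kfun d y - mkfun d γ) * ((y-γ)*stdφ (y-γ))) :=
    (Iwφ γ).bdd_mul (hkc.sub continuous_const).aestronglyMeasurable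
      (c := 4*d^2) (ae_of_all _ fun y => by rw [Real.norm_eq_abs]; exact hkmk y)
  have A3' := A3.const_mul (2*c^2)
  have A4 : Integrable (fun y : ℝ => (kfun d y - mkfun d γ)^2 * stdφ (y-γ)) :=
    (Iφ γ).bdd_mul ((hkc.sub continuous_const).pow 2).aestronglyMeasurable
      (c := (4*d^2)^2) (ae_of_all _ fun y => by
        rw [Real.norm_eq_abs, abs_pow]
        exact pow_le_pow_left₀ (abs_nonneg _) (hkmk y) 2)
  have A4' := A4.const_mul (c^2)
  have heq : (fun y : ℝ => stdφ (y-γ) * (t2 + (c*(y-γ) - c*(kfun d y - mkfun d γ))^2))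
      = fun y => (t2 * stdφ (y-γ) + c^2 * ((y-γ)^2*stdφ (y-γ)))
        - (2*c^2) * ((kfun d y - mkfun d γ) * ((y-γ)*stdφ (y-γ)))
        + c^2 * ((kfun d y - mkfun d γ)^2 * stdφ (y-γ)) := by
    funext y; ring
  have hA12 : Integrable (fun y : ℝ => t2 * stdφ (y-γ) + c^2 * ((y-γ)^2*stdφ (y-γ))) :=
    (A1.add A2).congr (by filter_upwards with y; simp only [Pi.add_apply])
  have hA123 : Integrable (fun y : ℝ => (t2 * stdφ (y-γ) + c^2 * ((y-γ)^2*stdφ (y-γ)))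
      - (2*c^2) * ((kfun d y - mkfun d γ) * ((y-γ)*stdφ (y-γ)))) :=
    (hA12.sub A3').congr (by filter_upwards with y; simp only [Pi.sub_apply])
  rw [heq, integral_add hA123 A4', integral_sub hA12 A3', integral_add A1 A2,
    MeasureTheory.integral_const_mul, MeasureTheory.integral_const_mul,
    MeasureTheory.integral_const_mul, MeasureTheory.integral_const_mul,
    stdφ_int_one, w2φ_int_one]
  have hkw : Integrable (fun y : ℝ => kfun d y * ((y-γ)*stdφ (y-γ))) :=
    (Iwφ γ).bdd_mul hkc.aestronglyMeasurable
      (c := 2*d^2) (ae_of_all _ fun y => by rw [Real.norm_eq_abs]; exact hkb y)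
  have hmkw := (Iwφ γ).const_mul (mkfun d γ)
  have hsplit : ∫ y : ℝ, (kfun d y - mkfun d γ) * ((y-γ)*stdφ (y-γ))
      = ∫ z, kfun d z * (z-γ) * stdφ (z-γ) := by
    have heq2 : (fun y : ℝ => (kfun d y - mkfun d γ) * ((y-γ)*stdφ (y-γ)))
        = fun y => kfun d y * ((y-γ)*stdφ (y-γ)) - mkfun d γ * ((y-γ)*stdφ (y-γ)) := by
      funext y; ring
    rw [heq2, integral_sub hkw hmkw, MeasureTheory.integral_const_mul, wφ_int_zero]
    simp only [mul_zero, sub_zero]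
    congr 1; funext z; ring
  rw [hsplit]
  ring

end outer

theorem stmt8 {Ω : Type*} [MeasurableSpace Ω] (P : Measure Ω) [IsProbabilityMeasure P]
    (θ γ σ vθ ρ d : ℝ) (hσ : 0 < σ) (hv : 0 < vθ) (hρ : ρ ∈ Set.Ioo (-1 : ℝ) 1)
    (hd : 0 < d) (θhat γhat : Ω → ℝ) (hθm : Measurable θhat) (hγm : Measurable γhat)
    (hjoint : Measure.map (fun ω => (θhat ω, γhat ω)) P =
      (volume : Measure (ℝ × ℝ)).withDensity
        (fun p => ENNReal.ofReal (bvnPdf θ γ (σ * Real.sqrt vθ) 1 ρ p))) :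
    (∫ ω, ((θhat ω - ρ * σ * Real.sqrt vθ * kfun d (γhat ω)) -
        ∫ ω', (θhat ω' - ρ * σ * Real.sqrt vθ * kfun d (γhat ω')) ∂P) ^ 2 ∂P) =
      σ ^ 2 * vθ * (1 - 2 * ρ ^ 2 * (∫ z, kfun d z * (z - γ) * stdφ (z - γ)) +
        ρ ^ 2 * ∫ z, (kfun d z - mkfun d γ) ^ 2 * stdφ (z - γ)) := by
  have hs : 0 < σ * Real.sqrt vθ := by positivity
  have hρ2 : ρ^2 < 1 := by
    obtain ⟨h1, h2⟩ := hρ; nlinarith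
  have hpm : Measurable (fun ω => (θhat ω, γhat ω)) := hθm.prodMk hγm
  have hnn := bvnPdf_nonneg (θ := θ) (γ := γ) hs hρ2
  have hcont := bvnPdf_cont (θ := θ) (γ := γ) (s := σ * Real.sqrt vθ) (ρ := ρ)
  have hpdfInt := pdf_integrable P _ hpm _ hcont hnn hjoint
  have hkc := kfun_cont d
  have hkb := kfun_bound hd
  set c' : ℝ := ρ * σ * Real.sqrt vθ with hc'
  -- the mean
  have hg1c : Continuous (fun y : ℝ => c' * kfun d y) := continuous_const.mul hkc
  have hg1b : ∀ y, |c' * kfun d y| ≤ (abs c') * (2*d^2) := fun y => by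
    rw [abs_mul]
    exact mul_le_mul_of_nonneg_left (hkb y) (abs_nonneg _)
  have hM : (∫ ω', (θhat ω' - ρ * σ * Real.sqrt vθ * kfun d (γhat ω')) ∂P)
      = θ - c' * mkfun d γ := by
    have t1 := transport P _ hpm _ hcont hnn hjoint
      (fun p : ℝ×ℝ => p.1 - c' * kfun d p.2)
      (continuous_fst.sub (continuous_const.mul (hkc.comp continuous_snd)))
    have t2 : ∫ p : ℝ×ℝ, bvnPdf θ γ (σ * Real.sqrt vθ) 1 ρ p * (p.1 - c' * kfun d p.2)
        = ∫ p : ℝ×ℝ, (p.1 - (fun y => c' * kfun d y) p.2) * bvnPdf θ γ (σ * Real.sqrt vθ) 1 ρ p := by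
      congr 1; funext p; ring
    have t3 := P1_eval hs hρ2 hpdfInt (fun y => c' * kfun d y) hg1c _ hg1b
    have t4 : ∫ y : ℝ, stdφ (y-γ) * (θ + ρ*(σ * Real.sqrt vθ)*(y-γ)
          - (fun y => c' * kfun d y) y)
        = θ - c' * mkfun d γ := mean_outer γ θ _ c' hd
    exact t1.trans (t2.trans (t3.trans t4))
  rw [hM]
  -- the variance
  have hg2c : Continuous (fun y : ℝ => c' * kfun d y + (θ - c' * mkfun d γ)) :=
    (continuous_const.mul hkc).add continuous_const
  have hg2b : ∀ y, |c' * kfun d y + (θ - c' * mkfun d γ)|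
      ≤ (abs c') * (2*d^2) + abs (θ - c' * mkfun d γ) := fun y =>
    (abs_add_le _ _).trans (add_le_add_left (hg1b y) _)
  have t1 := transport P _ hpm _ hcont hnn hjoint
    (fun p : ℝ×ℝ => (p.1 - c' * kfun d p.2 - (θ - c' * mkfun d γ))^2)
    (((continuous_fst.sub (continuous_const.mul (hkc.comp continuous_snd))).sub
      continuous_const).pow 2)
  have t2 : ∫ p : ℝ×ℝ, bvnPdf θ γ (σ * Real.sqrt vθ) 1 ρ p
        * (p.1 - c' * kfun d p.2 - (θ - c' * mkfun d γ))^2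
      = ∫ p : ℝ×ℝ, (p.1 - (fun y => c' * kfun d y + (θ - c' * mkfun d γ)) p.2)^2
        * bvnPdf θ γ (σ * Real.sqrt vθ) 1 ρ p := by
    congr 1; funext p; ring
  have t3 := P2_eval (θ := θ) (γ := γ) hs hρ2
    (fun y => c' * kfun d y + (θ - c' * mkfun d γ)) hg2c _ hg2b
  have t4 : ∫ y : ℝ, stdφ (y-γ) * ((σ * Real.sqrt vθ)^2*(1-ρ^2)
        + (θ + ρ*(σ * Real.sqrt vθ)*(y-γ)
          - (fun y => c' * kfun d y + (θ - c' * mkfun d γ)) y)^2)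
      = ∫ y : ℝ, stdφ (y-γ) * ((σ * Real.sqrt vθ)^2*(1-ρ^2)
        + (c'*(y-γ) - c'*(kfun d y - mkfun d γ))^2) := by
    congr 1; funext y; simp only [hc']; ring_nf
  have t5 := var_outer γ hd ((σ * Real.sqrt vθ)^2*(1-ρ^2)) c'
  have hs2 : (σ * Real.sqrt vθ)^2 = σ^2 * vθ := by
    rw [mul_pow, Real.sq_sqrt hv.le]
  set K1 := ∫ z, kfun d z * (z - γ) * stdφ (z - γ) with hK1
  set K2 := ∫ z, (kfun d z - mkfun d γ) ^ 2 * stdφ (z - γ) with hK2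
  calc (∫ ω, ((θhat ω - ρ * σ * Real.sqrt vθ * kfun d (γhat ω)) - (θ - c' * mkfun d γ)) ^ 2 ∂P)
      = (σ * Real.sqrt vθ)^2*(1-ρ^2) + c'^2 - 2*c'^2*K1 + c'^2*K2 :=
        t1.trans (t2.trans (t3.trans (t4.trans t5)))
    _ = σ ^ 2 * vθ * (1 - 2 * ρ ^ 2 * K1 + ρ ^ 2 * K2) := by
        rw [hc']
        rw [show (ρ * σ * Real.sqrt vθ)^2 = ρ^2 * ((σ * Real.sqrt vθ)^2) by ring]
        rw [hs2]
        ring
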